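/- Let d ≥ 1 and L ≥ 1 be integers, and let E ⊆ ℤ^d. Suppose there is a nearest-neighbor path with all its vertices in E whose first vertex lies in B_∞(0, 2L) and whose last vertex lies in S_∞(0, 4L). Then there exists x ∈ {-L, L}^d ⊆ ℤ^d such that there is a nearest-neighbor path with all its vertices in E whose first vertex lies in B_∞(x, L) and whose last vertex lies in S_∞(x, 3L). -/
import Mathlib


/-- The `ℓ^∞`-norm of a point of `ℤ^d`. -/
def normInf {d : ℕ} (x : Fin d → ℤ) : ℕ := Finset.univ.sup fun i => (x i).natAbs

/-- The `ℓ¹`-norm of a point of `ℤ^d`. -/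
def norm1 {d : ℕ} (x : Fin d → ℤ) : ℕ := ∑ i, (x i).natAbs

/-- `p 0, p 1, …, p n` is a nearest-neighbor path all of whose vertices lie in `E`. -/
def IsNNPathIn {d : ℕ} (E : Set (Fin d → ℤ)) (p : ℕ → (Fin d → ℤ)) (n : ℕ) : Prop :=
  (∀ i < n, norm1 (p (i + 1) - p i) = 1) ∧ ∀ i ≤ n, p i ∈ E

lemma natAbs_le_normInf {d : ℕ} (x : Fin d → ℤ) (i : Fin d) :
    (x i).natAbs ≤ normInf x := Finset.le_sup (f := fun i => (x i).natAbs) (Finset.mem_univ i)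

lemma natAbs_le_norm1 {d : ℕ} (x : Fin d → ℤ) (i : Fin d) :
    (x i).natAbs ≤ norm1 x :=
  Finset.single_le_sum (f := fun i => (x i).natAbs) (fun _ _ => Nat.zero_le _) (Finset.mem_univ i)

lemma normInf_sub_le {d : ℕ} (a b : Fin d → ℤ) :
    normInf a ≤ normInf b + norm1 (a - b) := by
  apply Finset.sup_le
  intro i _
  have h1 : (a i).natAbs ≤ (b i).natAbs + ((a - b) i).natAbs := by
    have := Int.natAbs_add_le (b i) (a i - b i)
    simp only [Pi.sub_apply]
    omega
  exact h1.trans (Nat.add_le_add (natAbs_le_normInf b i) (natAbs_le_norm1 _ i))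

lemma disc_ivt (f : ℕ → ℕ) (n c : ℕ) (h0 : f 0 < c) (hn : c ≤ f n)
    (hstep : ∀ i < n, f (i + 1) ≤ f i + 1) : ∃ m ≤ n, f m = c := by
  have hex : ∃ m, c ≤ f m := ⟨n, hn⟩
  set m := Nat.find hex with hm
  have hmspec : c ≤ f m := Nat.find_spec hex
  have hmn : m ≤ n := Nat.find_le hn
  have hm0 : m ≠ 0 := by
    intro h; rw [h] at hmspec; omega
  have hprev : ¬ c ≤ f (m - 1) := Nat.find_min hex (by omega)
  have hlt : m - 1 < n := by omega
  have := hstep (m - 1) hlt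
  refine ⟨m, hmn, ?_⟩
  have heq : m - 1 + 1 = m := by omega
  have h' := hstep (m - 1) hlt
  rw [heq] at h'
  omega

/-- Deterministic covering step: a crossing of `E` from `B_∞(0,2L)` to `S_∞(0,4L)`
forces a crossing from `B_∞(x,L)` to `S_∞(x,3L)` for some `x ∈ {-L,L}^d`. -/
theorem stmt8 (d L : ℕ) (hd : 1 ≤ d) (hL : 1 ≤ L) (E : Set (Fin d → ℤ))
    (hpath : ∃ (p : ℕ → (Fin d → ℤ)) (n : ℕ), IsNNPathIn E p n ∧
      normInf (p 0) ≤ 2 * L ∧ normInf (p n) = 4 * L) :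
    ∃ x : Fin d → ℤ, (∀ i, x i = (L : ℤ) ∨ x i = -(L : ℤ)) ∧
      ∃ (p : ℕ → (Fin d → ℤ)) (n : ℕ), IsNNPathIn E p n ∧
        normInf (p 0 - x) ≤ L ∧ normInf (p n - x) = 3 * L := by
  obtain ⟨p, n, ⟨hstep, hmem⟩, h0, hn⟩ := hpath
  set x : Fin d → ℤ := fun i => if 0 ≤ p 0 i then (L : ℤ) else -(L : ℤ) with hx
  have hxval : ∀ i, x i = (L : ℤ) ∨ x i = -(L : ℤ) := by
    intro i; by_cases h : 0 ≤ p 0 i <;> simp [hx, h]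
  have hxabs : ∀ i, (x i).natAbs = L := by
    intro i; rcases hxval i with h | h <;> simp [h]
  have hstart : normInf (p 0 - x) ≤ L := by
    apply Finset.sup_le
    intro i _
    have h1 : (p 0 i).natAbs ≤ 2 * L := (natAbs_le_normInf (p 0) i).trans h0
    simp only [Pi.sub_apply, hx]
    split_ifs with h <;> omega
  -- the ℓ∞-distance to x along the path
  set f : ℕ → ℕ := fun m => normInf (p m - x) with hf
  have hfstep : ∀ i < n, f (i + 1) ≤ f i + 1 := by
    intro i hi
    have h1 : (p (i + 1) - x) - (p i - x) = p (i + 1) - p i := by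
      ext j; simp only [Pi.sub_apply]; ring
    have := normInf_sub_le (p (i + 1) - x) (p i - x)
    rw [h1, hstep i hi] at this
    exact this
  have hf0 : f 0 < 3 * L := lt_of_le_of_lt hstart (by omega)
  have hfn : 3 * L ≤ f n := by
    obtain ⟨i, _, hi⟩ := Finset.exists_mem_eq_sup (Finset.univ : Finset (Fin d))
      (Finset.univ_nonempty_iff.mpr ⟨⟨0, hd⟩⟩) (fun i => (p n i).natAbs)
    have h4 : (p n i).natAbs = 4 * L := by rw [← hn]; exact hi.symm
    have h5 : 3 * L ≤ ((p n - x) i).natAbs := by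
      have hxi := hxabs i
      simp only [Pi.sub_apply]
      omega
    exact h5.trans (natAbs_le_normInf _ i)
  obtain ⟨m, hmn, hfm⟩ := disc_ivt f n (3 * L) hf0 hfn hfstep
  exact ⟨x, hxval, p, m, ⟨fun i hi => hstep i (lt_of_lt_of_le hi hmn),
    fun i hi => hmem i (le_trans hi hmn)⟩, hstart, hfm⟩
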